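/- arXiv:2602.11854 — 4 statements merged into one kernel-verified Lean document; each statement's English description precedes it below -/
import Mathlib

section
/- Let n be a positive integer, let X ⊆ {0,1}^n be nonempty, let c ∈ ℝ^n, let d ∈ ℝ^n with d_1 ≥ d_2 ≥ … ≥ d_n ≥ 0, set d_{n+1} = 0, and let Γ be an integer with 0 ≤ Γ ≤ n. Then min over x ∈ X of [ Σ_{i=1}^n c_i x_i + max{ Σ_{j∈S} d_j x_j : S ⊆ {1,…,n}, |S| ≤ Γ } ] equals min over ℓ ∈ {1,…,n+1} of [ Γ d_ℓ + min over x ∈ X of ( Σ_{i=1}^n c_i x_i + Σ_{j=1}^{ℓ} (d_j − d_ℓ) x_j ) ]. -/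
lemma binary_sum_filter {x : ℕ → ℝ} {s : Finset ℕ} (hb : ∀ i ∈ s, x i = 0 ∨ x i = 1) (f : ℕ → ℝ) :
    ∑ i ∈ s, f i * x i = ∑ i ∈ s.filter (fun i => x i = 1), f i := by
  rw [Finset.sum_filter]
  refine Finset.sum_congr rfl fun i hi => ?_
  rcases hb i hi with h | h <;> simp [h]

lemma exists_downset (T : Finset ℕ) : ∀ k, k ≤ T.card →
    ∃ S ⊆ T, S.card = k ∧ ∀ a ∈ S, ∀ b ∈ T \ S, a < b := by
  intro k
  induction k with
  | zero => intro _; exact ⟨∅, Finset.empty_subset _, rfl, by simp⟩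
  | succ k ih =>
    intro hk
    obtain ⟨S, hST, hcard, hlt⟩ := ih (Nat.le_of_succ_le hk)
    have hne : (T \ S).Nonempty := by
      rw [← Finset.card_pos, Finset.card_sdiff_of_subset hST]
      omega
    set m := (T \ S).min' hne with hm
    have hmmem : m ∈ T \ S := (T \ S).min'_mem hne
    rw [Finset.mem_sdiff] at hmmem
    refine ⟨insert m S, ?_, ?_, ?_⟩
    · exact Finset.insert_subset hmmem.1 hST
    · rw [Finset.card_insert_of_notMem hmmem.2, hcard]
    · intro a ha b hb
      rw [Finset.mem_sdiff, Finset.mem_insert] at hb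
      push_neg at hb
      have hbTS : b ∈ T \ S := Finset.mem_sdiff.2 ⟨hb.1, hb.2.2⟩
      rcases Finset.mem_insert.1 ha with rfl | haS
      · exact lt_of_le_of_ne ((T \ S).min'_le b hbTS) (Ne.symm hb.2.1)
      · exact hlt a haS b hbTS

lemma key_le (n Γ : ℕ) (d : ℕ → ℝ)
    (hsort : ∀ i j, 1 ≤ i → i ≤ j → j ≤ n + 1 → d j ≤ d i)
    (hdnn : ∀ i, 1 ≤ i → i ≤ n → 0 ≤ d i)
    (hdend : d (n + 1) = 0)
    (x : ℕ → ℝ) (hx : ∀ i ∈ Finset.Icc 1 n, x i = 0 ∨ x i = 1)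
    (l : ℕ) (hl1 : 1 ≤ l) (hl2 : l ≤ n + 1)
    (S : Finset ℕ) (hS : S ⊆ Finset.Icc 1 n) (hSc : S.card ≤ Γ) :
    ∑ j ∈ S, d j * x j ≤ (Γ : ℝ) * d l + ∑ j ∈ Finset.Icc 1 (min l n), (d j - d l) * x j := by
  have hx01 : ∀ i ∈ Finset.Icc 1 n, 0 ≤ x i ∧ x i ≤ 1 := by
    intro i hi; rcases hx i hi with h | h <;> simp [h]
  have hdl0 : 0 ≤ d l := by
    rcases eq_or_lt_of_le hl2 with h | h
    · rw [h, hdend]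
    · exact hdnn l hl1 (by omega)
  set L := Finset.Icc 1 (min l n) with hL
  have hsplit : ∑ j ∈ S ∩ L, d j * x j + ∑ j ∈ S \ L, d j * x j = ∑ j ∈ S, d j * x j :=
    Finset.sum_inter_add_sum_sdiff S L _
  have hmemIcc : ∀ j ∈ S, 1 ≤ j ∧ j ≤ n := fun j hj => Finset.mem_Icc.1 (hS hj)
  -- bound on S ∩ L
  have h1 : ∑ j ∈ S ∩ L, d j * x j ≤
      ∑ j ∈ L, (d j - d l) * x j + (S ∩ L).card * d l := by
    have step1 : ∑ j ∈ S ∩ L, d j * x j ≤ ∑ j ∈ S ∩ L, ((d j - d l) * x j + d l) := by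
      refine Finset.sum_le_sum fun j hj => ?_
      have hjn : 1 ≤ j ∧ j ≤ n := hmemIcc j (Finset.mem_inter.1 hj).1
      have := hx01 j (Finset.mem_Icc.2 hjn)
      nlinarith [this.1, this.2]
    rw [Finset.sum_add_distrib, Finset.sum_const, nsmul_eq_mul] at step1
    refine step1.trans (add_le_add_left ?_ _)
    refine Finset.sum_le_sum_of_subset_of_nonneg (Finset.inter_subset_right) fun j hj _ => ?_
    have hjL : 1 ≤ j ∧ j ≤ min l n := Finset.mem_Icc.1 hj
    have hdj : d l ≤ d j := hsort j l hjL.1 (by omega) hl2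
    have hxj := (hx01 j (Finset.mem_Icc.2 ⟨hjL.1, by omega⟩)).1
    nlinarith
  -- bound on S \ L
  have h2 : ∑ j ∈ S \ L, d j * x j ≤ (S \ L).card * d l := by
    rw [← nsmul_eq_mul, ← Finset.sum_const]
    refine Finset.sum_le_sum fun j hj => ?_
    rw [Finset.mem_sdiff] at hj
    have hjn := hmemIcc j hj.1
    have hjL : ¬ (1 ≤ j ∧ j ≤ min l n) := fun h => hj.2 (Finset.mem_Icc.2 h)
    have hlj : l ≤ j := by omega
    have hdj : d j ≤ d l := hsort l j hl1 hlj (by omega)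
    have hdj0 : 0 ≤ d j := hdnn j hjn.1 hjn.2
    have hxj := hx01 j (Finset.mem_Icc.2 hjn)
    nlinarith [hxj.1, hxj.2]
  have hcards : (S ∩ L).card + (S \ L).card = S.card := Finset.card_inter_add_card_sdiff S L
  have hcardR : ((S ∩ L).card : ℝ) + ((S \ L).card : ℝ) ≤ (Γ : ℝ) := by
    push_cast [← hcards] at *
    exact_mod_cast Nat.cast_le.2 (hcards ▸ hSc)
  nlinarith [hdl0]

lemma key_ex (n Γ : ℕ) (d : ℕ → ℝ)
    (hdend : d (n + 1) = 0)
    (x : ℕ → ℝ) (hx : ∀ i ∈ Finset.Icc 1 n, x i = 0 ∨ x i = 1) :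
    ∃ l, 1 ≤ l ∧ l ≤ n + 1 ∧ ∃ S : Finset ℕ, S ⊆ Finset.Icc 1 n ∧ S.card ≤ Γ ∧
      ∑ j ∈ S, d j * x j = (Γ : ℝ) * d l + ∑ j ∈ Finset.Icc 1 (min l n), (d j - d l) * x j := by
  set T := (Finset.Icc 1 n).filter (fun i => x i = 1) with hT
  have hTsub : T ⊆ Finset.Icc 1 n := Finset.filter_subset _ _
  by_cases hc : T.card ≤ Γ
  · -- l = n + 1
    refine ⟨n + 1, by omega, le_refl _, T, hTsub, hc, ?_⟩
    have hmin : min (n + 1) n = n := by omega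
    rw [hmin, hdend]
    have : ∑ j ∈ Finset.Icc 1 n, (d j - 0) * x j = ∑ j ∈ T, (d j - 0) := by
      exact binary_sum_filter hx _
    rw [this]
    have hxT : ∀ j ∈ T, x j = 1 := fun j hj => (Finset.mem_filter.1 hj).2
    simp only [sub_zero]
    rw [show ∑ j ∈ T, d j * x j = ∑ j ∈ T, d j from
      Finset.sum_congr rfl fun j hj => by rw [hxT j hj, mul_one]]
    push_cast
    ring
  · push_neg at hc
    obtain ⟨S', hS'T, hS'card, hS'lt⟩ := exists_downset T (Γ + 1) hc
    have hS'ne : S'.Nonempty := Finset.card_pos.1 (by omega)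
    set l := S'.max' hS'ne with hl
    have hlT : l ∈ T := hS'T (S'.max'_mem hS'ne)
    have hlIcc : 1 ≤ l ∧ l ≤ n := Finset.mem_Icc.1 (hTsub hlT)
    have hminl : min l n = l := by omega
    set S := S'.erase l with hS
    have hSsub : S ⊆ Finset.Icc 1 n := fun j hj => hTsub (hS'T (Finset.erase_subset _ _ hj))
    have hScard : S.card = Γ := by
      rw [hS, Finset.card_erase_of_mem (S'.max'_mem hS'ne), hS'card]; omega
    refine ⟨l, hlIcc.1, by omega, S, hSsub, by omega, ?_⟩
    -- the filter of Icc 1 l equals S'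
    have hxbin' : ∀ i ∈ Finset.Icc 1 l, x i = 0 ∨ x i = 1 := fun i hi => by
      have := Finset.mem_Icc.1 hi
      exact hx i (Finset.mem_Icc.2 ⟨this.1, by omega⟩)
    have hfilter : (Finset.Icc 1 l).filter (fun i => x i = 1) = S' := by
      ext j
      simp only [Finset.mem_filter, Finset.mem_Icc]
      constructor
      · rintro ⟨⟨hj1, hjl⟩, hxj⟩
        have hjT : j ∈ T := Finset.mem_filter.2 ⟨Finset.mem_Icc.2 ⟨hj1, by omega⟩, hxj⟩
        by_contra hjS
        have := hS'lt l (S'.max'_mem hS'ne) j (Finset.mem_sdiff.2 ⟨hjT, hjS⟩)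
        omega
      · intro hjS
        have hjT := hS'T hjS
        have hjIcc := Finset.mem_Icc.1 (hTsub hjT)
        exact ⟨⟨hjIcc.1, S'.le_max' j hjS⟩, (Finset.mem_filter.1 hjT).2⟩
    have hsum1 : ∑ j ∈ Finset.Icc 1 (min l n), (d j - d l) * x j = ∑ j ∈ S', (d j - d l) := by
      rw [hminl, binary_sum_filter hxbin' _, hfilter]
    have hsum2 : ∑ j ∈ S', (d j - d l) = (∑ j ∈ S', d j) - (Γ + 1 : ℝ) * d l := by
      rw [Finset.sum_sub_distrib, Finset.sum_const, hS'card, nsmul_eq_mul]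
      push_cast; ring
    have hsum3 : ∑ j ∈ S', d j = (∑ j ∈ S, d j) + d l := by
      rw [hS, ← Finset.sum_erase_add S' _ (S'.max'_mem hS'ne)]
    have hxS : ∀ j ∈ S, x j = 1 := fun j hj =>
      (Finset.mem_filter.1 (hS'T (Finset.erase_subset _ _ hj))).2
    have hsum4 : ∑ j ∈ S, d j * x j = ∑ j ∈ S, d j :=
      Finset.sum_congr rfl fun j hj => by rw [hxS j hj, mul_one]
    rw [hsum1, hsum2, hsum3, hsum4]
    push_cast
    ring

lemma W_finite (n : ℕ) (X : Set (ℕ → ℝ))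
    (hXbin : ∀ x ∈ X, ∀ i ∈ Finset.Icc 1 n, x i = 0 ∨ x i = 1)
    (c : ℕ → ℝ) (f : ℕ → ℝ) (m : ℕ) (hm : m ≤ n) :
    {w : ℝ | ∃ x ∈ X, w = (∑ i ∈ Finset.Icc 1 n, c i * x i) + ∑ j ∈ Finset.Icc 1 m, f j * x j}.Finite := by
  apply Set.Finite.subset (Set.Finite.image
    (fun T : Finset ℕ => (∑ i ∈ T, c i) + ∑ j ∈ T ∩ Finset.Icc 1 m, f j)
    (Finset.Icc 1 n).powerset.finite_toSet)
  rintro w ⟨x, hxX, rfl⟩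
  have hxb := hXbin x hxX
  have hxb' : ∀ i ∈ Finset.Icc 1 m, x i = 0 ∨ x i = 1 := by
    intro i hi
    have := Finset.mem_Icc.1 hi
    exact hxb i (Finset.mem_Icc.2 ⟨this.1, le_trans this.2 hm⟩)
  refine ⟨(Finset.Icc 1 n).filter (fun i => x i = 1), ?_, ?_⟩
  · exact Finset.mem_coe.2 (Finset.mem_powerset.2 (Finset.filter_subset _ _))
  · have h1 : ∑ i ∈ Finset.Icc 1 n, c i * x i
        = ∑ i ∈ (Finset.Icc 1 n).filter (fun i => x i = 1), c i := binary_sum_filter hxb c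
    have h2 : ∑ j ∈ Finset.Icc 1 m, f j * x j
        = ∑ j ∈ (Finset.Icc 1 m).filter (fun i => x i = 1), f j := binary_sum_filter hxb' f
    have h3 : (Finset.Icc 1 m).filter (fun i => x i = 1)
        = ((Finset.Icc 1 n).filter (fun i => x i = 1)) ∩ Finset.Icc 1 m := by
      ext j
      simp only [Finset.mem_filter, Finset.mem_inter, Finset.mem_Icc]
      constructor
      · rintro ⟨⟨ha, hb⟩, hc⟩; exact ⟨⟨⟨ha, le_trans hb hm⟩, hc⟩, ha, hb⟩
      · rintro ⟨⟨_, hc⟩, ha, hb⟩; exact ⟨⟨ha, hb⟩, hc⟩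
    simp only [h1, h2, h3]

lemma exists_greatest_w (n Γ : ℕ) (d x : ℕ → ℝ) :
    ∃ w, IsGreatest {w' : ℝ | ∃ S : Finset ℕ, S ⊆ Finset.Icc 1 n ∧ S.card ≤ Γ ∧
      w' = ∑ j ∈ S, d j * x j} w := by
  classical
  set F : Finset ℝ := ((Finset.Icc 1 n).powerset.filter fun S => S.card ≤ Γ).image
    (fun S => ∑ j ∈ S, d j * x j) with hF
  have hFne : F.Nonempty :=
    ⟨∑ j ∈ (∅ : Finset ℕ), d j * x j, Finset.mem_image_of_mem _ (by simp)⟩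
  have hset : {w' : ℝ | ∃ S : Finset ℕ, S ⊆ Finset.Icc 1 n ∧ S.card ≤ Γ ∧
      w' = ∑ j ∈ S, d j * x j} = ↑F := by
    ext w'
    simp only [Set.mem_setOf_eq, hF, Finset.coe_image, Set.mem_image, Finset.mem_coe,
      Finset.mem_filter, Finset.mem_powerset]
    constructor
    · rintro ⟨S, h1, h2, rfl⟩; exact ⟨S, ⟨h1, h2⟩, rfl⟩
    · rintro ⟨S, ⟨h1, h2⟩, rfl⟩; exact ⟨S, h1, h2, rfl⟩
  refine ⟨F.max' hFne, ?_, ?_⟩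
  · rw [hset]; exact F.max'_mem hFne
  · intro b hb
    rw [hset] at hb
    exact F.le_max' b hb





/-- Bertsimas–Sim decomposition: a robust combinatorial optimization problem under a
discrete budgeted uncertainty set (with deviations `d_1 ≥ … ≥ d_n ≥ 0`, `d_{n+1} = 0`)
decomposes into `n+1` nominal problems.  Indices run over `{1, …, n}`, and the binary
feasible set `X` consists of functions binary on `{1, …, n}`. -/
theorem stmt4 (n : ℕ) (hn : 0 < n) (X : Set (ℕ → ℝ)) (hXne : X.Nonempty)
    (hXbin : ∀ x ∈ X, ∀ i ∈ Finset.Icc 1 n, x i = 0 ∨ x i = 1)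
    (c d : ℕ → ℝ)
    (hsort : ∀ i j, 1 ≤ i → i ≤ j → j ≤ n + 1 → d j ≤ d i)
    (hdnn : ∀ i, 1 ≤ i → i ≤ n → 0 ≤ d i)
    (hdend : d (n + 1) = 0)
    (Γ : ℕ) (hΓ : Γ ≤ n) :
    sInf {v : ℝ | ∃ x ∈ X, ∃ w : ℝ,
        IsGreatest {w' : ℝ | ∃ S : Finset ℕ, S ⊆ Finset.Icc 1 n ∧ S.card ≤ Γ ∧
          w' = ∑ j ∈ S, d j * x j} w ∧
        v = (∑ i ∈ Finset.Icc 1 n, c i * x i) + w} =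
      sInf {v : ℝ | ∃ l ∈ Finset.Icc 1 (n + 1),
        v = (Γ : ℝ) * d l +
          sInf {w : ℝ | ∃ x ∈ X,
            w = (∑ i ∈ Finset.Icc 1 n, c i * x i) +
              ∑ j ∈ Finset.Icc 1 (min l n), (d j - d l) * x j}} := by
  classical
  set A := {v : ℝ | ∃ x ∈ X, ∃ w : ℝ,
        IsGreatest {w' : ℝ | ∃ S : Finset ℕ, S ⊆ Finset.Icc 1 n ∧ S.card ≤ Γ ∧
          w' = ∑ j ∈ S, d j * x j} w ∧
        v = (∑ i ∈ Finset.Icc 1 n, c i * x i) + w} with hA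
  set B := {v : ℝ | ∃ l ∈ Finset.Icc 1 (n + 1),
        v = (Γ : ℝ) * d l +
          sInf {w : ℝ | ∃ x ∈ X,
            w = (∑ i ∈ Finset.Icc 1 n, c i * x i) +
              ∑ j ∈ Finset.Icc 1 (min l n), (d j - d l) * x j}} with hB
  -- the inner nominal sets
  have hWfin : ∀ l : ℕ, ({w : ℝ | ∃ x ∈ X,
      w = (∑ i ∈ Finset.Icc 1 n, c i * x i) +
        ∑ j ∈ Finset.Icc 1 (min l n), (d j - d l) * x j}).Finite :=
    fun l => W_finite n X hXbin c (fun j => d j - d l) (min l n) (min_le_right _ _)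
  have hWne : ∀ l : ℕ, ({w : ℝ | ∃ x ∈ X,
      w = (∑ i ∈ Finset.Icc 1 n, c i * x i) +
        ∑ j ∈ Finset.Icc 1 (min l n), (d j - d l) * x j}).Nonempty := by
    intro l
    obtain ⟨x, hx⟩ := hXne
    exact ⟨_, x, hx, rfl⟩
  -- A is nonempty
  have hAne : A.Nonempty := by
    obtain ⟨x, hx⟩ := hXne
    obtain ⟨w, hw⟩ := exists_greatest_w n Γ d x
    exact ⟨_, x, hx, w, hw, rfl⟩
  -- A is bounded below
  have hAbdd : BddBelow A := by
    refine ⟨-∑ i ∈ Finset.Icc 1 n, |c i|, ?_⟩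
    rintro a ⟨x, hxX, w, hw, rfl⟩
    have hw0 : (0 : ℝ) ≤ w := hw.2 ⟨∅, by simp⟩
    have hcx : -∑ i ∈ Finset.Icc 1 n, |c i| ≤ ∑ i ∈ Finset.Icc 1 n, c i * x i := by
      rw [← Finset.sum_neg_distrib]
      refine Finset.sum_le_sum fun i hi => ?_
      rcases hXbin x hxX i hi with h | h <;> rw [h]
      · simp [abs_nonneg]
      · rw [mul_one]; exact neg_abs_le _
    linarith
  -- B is nonempty
  have hBne : B.Nonempty := ⟨_, 1, Finset.mem_Icc.2 ⟨le_refl 1, by omega⟩, rfl⟩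
  -- B is bounded below (B is finite)
  have hBbdd : BddBelow B := by
    have hfin : B.Finite := by
      apply Set.Finite.subset (Set.Finite.image
        (fun l : ℕ => (Γ : ℝ) * d l +
          sInf {w : ℝ | ∃ x ∈ X,
            w = (∑ i ∈ Finset.Icc 1 n, c i * x i) +
              ∑ j ∈ Finset.Icc 1 (min l n), (d j - d l) * x j})
        (Finset.Icc 1 (n + 1)).finite_toSet)
      rintro b ⟨l, hl, rfl⟩
      exact ⟨l, hl, rfl⟩
    exact hfin.bddBelow
  apply le_antisymm
  · -- sInf A ≤ sInf B
    refine le_csInf hBne ?_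
    rintro b ⟨l, hl, rfl⟩
    rw [Finset.mem_Icc] at hl
    obtain ⟨x, hxX, hxeq⟩ := Set.Nonempty.csInf_mem (hWne l) (hWfin l)
    obtain ⟨w, hw⟩ := exists_greatest_w n Γ d x
    have hmemA : (∑ i ∈ Finset.Icc 1 n, c i * x i) + w ∈ A := ⟨x, hxX, w, hw, rfl⟩
    refine (csInf_le hAbdd hmemA).trans ?_
    obtain ⟨S, hSsub, hScard, hweq⟩ := hw.1
    have hle := key_le n Γ d hsort hdnn hdend x (hXbin x hxX) l hl.1 hl.2 S hSsub hScard
    rw [hxeq]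
    linarith [hweq ▸ hle]
  · -- sInf B ≤ sInf A
    refine le_csInf hAne ?_
    rintro a ⟨x, hxX, w, hw, rfl⟩
    obtain ⟨l, hl1, hl2, S, hSsub, hScard, heq⟩ := key_ex n Γ d hdend x (hXbin x hxX)
    have hmemB : (Γ : ℝ) * d l +
        sInf {w : ℝ | ∃ x ∈ X,
          w = (∑ i ∈ Finset.Icc 1 n, c i * x i) +
            ∑ j ∈ Finset.Icc 1 (min l n), (d j - d l) * x j} ∈ B :=
      ⟨l, Finset.mem_Icc.2 ⟨hl1, hl2⟩, rfl⟩
    refine (csInf_le hBbdd hmemB).trans ?_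
    have h1 : sInf {w : ℝ | ∃ x ∈ X,
        w = (∑ i ∈ Finset.Icc 1 n, c i * x i) +
          ∑ j ∈ Finset.Icc 1 (min l n), (d j - d l) * x j} ≤
        (∑ i ∈ Finset.Icc 1 n, c i * x i) +
          ∑ j ∈ Finset.Icc 1 (min l n), (d j - d l) * x j :=
      csInf_le (hWfin l).bddBelow ⟨x, hxX, rfl⟩
    have h2 : ∑ j ∈ S, d j * x j ≤ w := hw.2 ⟨S, hSsub, hScard, rfl⟩
    linarith
end

section
/- Let M be a finite simple graph on a vertex set V with |V| ≥ 3, let v ∈ V be a vertex of degree 1 with unique neighbor u, and let T ⊆ V be RLP-feasible for M. Then u ∈ T. -/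
/-- `T ⊆ V` is RLP-feasible for the graph `G` if every pair of distinct nonadjacent
vertices is joined by a walk all of whose internal vertices belong to `T`. -/
def RLPFeasible {V : Type*} (G : SimpleGraph V) (T : Set V) : Prop :=
  ∀ p q : V, p ≠ q → ¬ G.Adj p q →
    ∃ w : G.Walk p q, ∀ v ∈ w.support, v ≠ p → v ≠ q → v ∈ T

/-- Correctness of the preprocessing step: if `v` has degree 1 with unique neighbor
`u` in a finite simple graph on at least 3 vertices, then every RLP-feasible set
contains `u`. -/
theorem stmt9 {V : Type*} [Fintype V] [DecidableEq V] (G : SimpleGraph V)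
    [DecidableRel G.Adj] (hcard : 3 ≤ Fintype.card V) (v u : V)
    (hdeg : G.degree v = 1) (hadj : G.Adj v u)
    (T : Set V) (hT : RLPFeasible G T) : u ∈ T := by
  -- unique neighbor: any neighbor of v equals u
  have huniq : ∀ x, G.Adj v x → x = u := by
    intro x hx
    have hmem : x ∈ G.neighborFinset v := by simpa using hx
    have hu : u ∈ G.neighborFinset v := by simpa using hadj
    have h1 : (G.neighborFinset v).card = 1 := hdeg
    obtain ⟨a, ha⟩ := Finset.card_eq_one.mp h1
    rw [ha, Finset.mem_singleton] at hmem hu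
    rw [hmem, hu]
  -- pick a third vertex w ≠ v, u
  have : ∃ x : V, x ≠ v ∧ x ≠ u := by
    by_contra hc
    push_neg at hc
    have hsub : (Finset.univ : Finset V) ⊆ {v, u} := by
      intro x _
      rcases em (x = v) with h | h
      · simp [h]
      · simp [hc x h]
    have := Finset.card_le_card hsub
    have h2 : ({v, u} : Finset V).card ≤ 2 :=
      (Finset.card_insert_le _ _).trans (by simp)
    rw [Finset.card_univ] at this
    omega
  obtain ⟨x, hxv, hxu⟩ := this
  have hvx : v ≠ x := fun h => hxv h.symm
  have hnadj : ¬ G.Adj v x := fun h => hxu (huniq x h)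
  obtain ⟨p, hp⟩ := hT v x hvx hnadj
  -- the second vertex of p is a neighbor of v, hence u
  cases p with
  | nil => exact absurd rfl hvx
  | cons h q =>
    rename_i b
    have hbu : b = u := huniq b h
    subst hbu
    exact hp b (by simp [SimpleGraph.Walk.support_cons]) (G.ne_of_adj h).symm (Ne.symm hxu)
end

section
/- Let M be a finite simple graph on a vertex set V and let T ⊆ V be a connected dominating set of M. Then T is RLP-feasible for M: for every pair of distinct vertices p, q that are not adjacent in M there exists a walk from p to q in M all of whose internal vertices belong to T. -/
/-- `T ⊆ V` is a connected dominating set of `G` if `T` is nonempty, every vertex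
outside `T` is adjacent to some vertex of `T`, and the subgraph induced by `T` is
connected. -/
def ConnDomSet {V : Type*} (G : SimpleGraph V) (T : Set V) : Prop :=
  T.Nonempty ∧ (∀ v ∉ T, ∃ u ∈ T, G.Adj v u) ∧ (G.induce T).Connected

/-- Every connected dominating set of a finite simple graph is RLP-feasible. -/
theorem stmt11 {V : Type*} [Fintype V] (G : SimpleGraph V) (T : Set V)
    (hT : ConnDomSet G T) : RLPFeasible G T := by
  obtain ⟨hne, hdom, hconn⟩ := hT
  intro p q hpq hadj
  -- find a T-vertex attached to p
  obtain ⟨tp, htp, wp, hwp⟩ :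
      ∃ t, ∃ ht : t ∈ T, ∃ w : G.Walk p t, ∀ v ∈ w.support, v = p ∨ v ∈ T := by
    by_cases hp : p ∈ T
    · exact ⟨p, hp, SimpleGraph.Walk.nil, by simp⟩
    · obtain ⟨u, hu, ha⟩ := hdom p hp
      exact ⟨u, hu, SimpleGraph.Walk.cons ha SimpleGraph.Walk.nil, by
        intro v hv; simp at hv; rcases hv with h | h
        · exact Or.inl h
        · exact Or.inr (h ▸ hu)⟩
  obtain ⟨tq, htq, wq, hwq⟩ :
      ∃ t, ∃ ht : t ∈ T, ∃ w : G.Walk t q, ∀ v ∈ w.support, v = q ∨ v ∈ T := by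
    by_cases hq : q ∈ T
    · exact ⟨q, hq, SimpleGraph.Walk.nil, by simp⟩
    · obtain ⟨u, hu, ha⟩ := hdom q hq
      exact ⟨u, hu, (SimpleGraph.Walk.cons ha SimpleGraph.Walk.nil).reverse, by
        intro v hv; simp at hv; rcases hv with h | h
        · exact Or.inr (h ▸ hu)
        · exact Or.inl h⟩
  -- connect tp and tq inside the induced subgraph
  obtain ⟨wm⟩ := hconn.preconnected ⟨tp, htp⟩ ⟨tq, htq⟩
  let f : G.induce T ↪g G := SimpleGraph.Embedding.induce T
  let wmid : G.Walk tp tq := wm.map f.toHom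
  have hwmid : ∀ v ∈ wmid.support, v ∈ T := by
    intro v hv
    replace hv : v ∈ (wm.map f.toHom).support := hv
    rw [SimpleGraph.Walk.support_map] at hv
    simp only [List.mem_map] at hv
    obtain ⟨x, _, hx⟩ := hv
    rw [← hx]
    exact x.2
  refine ⟨wp.append (wmid.append wq), ?_⟩
  intro v hv hvp hvq
  rw [SimpleGraph.Walk.mem_support_append_iff] at hv
  rcases hv with h | h
  · rcases hwp v h with h' | h'
    · exact absurd h' hvp
    · exact h'
  · rw [SimpleGraph.Walk.mem_support_append_iff] at h
    rcases h with h | h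
    · exact hwmid v h
    · rcases hwq v h with h' | h'
      · exact absurd h' hvq
      · exact h'
end

section
/- Let M be a finite connected simple graph on a vertex set V that is not complete (i.e., there exist two distinct nonadjacent vertices). Then the minimum cardinality of an RLP-feasible subset of V equals the minimum cardinality of a connected dominating set of M. -/
lemma walk_reach_induce {V : Type*} {G : SimpleGraph V} {T : Set V} :
    ∀ {a b : V} (w : G.Walk a b), (∀ v ∈ w.support, v ∈ T) →
    ∀ (ha : a ∈ T) (hb : b ∈ T), (G.induce T).Reachable ⟨a, ha⟩ ⟨b, hb⟩ := by
  intro a b w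
  induction w with
  | nil => intro _ ha hb; rfl
  | @cons a x b h w ih =>
    intro hw ha hb
    have hx : x ∈ T := hw x (by simp) 
    have step : (G.induce T).Adj ⟨a, ha⟩ ⟨x, hx⟩ := h
    exact step.reachable.trans (ih (fun v hv => hw v (by simp [hv])) hx hb)

lemma cds_to_rlp {V : Type*} {G : SimpleGraph V} {T : Set V}
    (hT : ConnDomSet G T) : RLPFeasible G T := by
  obtain ⟨hne, hdom, hc⟩ := hT
  have key : ∀ x : V, ∃ u, ∃ hu : u ∈ T, ∃ w : G.Walk x u,
      ∀ v ∈ w.support, v ≠ x → v ∈ T := by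
    intro x
    by_cases hx : x ∈ T
    · exact ⟨x, hx, SimpleGraph.Walk.nil, by simp⟩
    · obtain ⟨u, hu, hadj⟩ := hdom x hx
      exact ⟨u, hu, hadj.toWalk, by
        intro v hv hvx
        simp [SimpleGraph.Walk.support_cons] at hv
        rcases hv with h | h
        · exact absurd h hvx
        · exact h ▸ hu⟩
  intro p q hpq hnadj
  obtain ⟨u, hu, w1, hw1⟩ := key p
  obtain ⟨u', hu', w2, hw2⟩ := key q
  obtain ⟨wm⟩ := hc ⟨u, hu⟩ ⟨u', hu'⟩
  let wmid : G.Walk u u' := wm.map (SimpleGraph.Embedding.induce T).toHom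
  have hmid : ∀ v ∈ wmid.support, v ∈ T := by
    intro v hv
    replace hv : v ∈ wm.support.map (SimpleGraph.Embedding.induce (G := G) T).toHom := by
      rw [← SimpleGraph.Walk.support_map]; exact hv
    simp only [List.mem_map] at hv
    obtain ⟨⟨y, hy⟩, _, rfl⟩ := hv
    exact hy
  refine ⟨w1.append (wmid.append w2.reverse), ?_⟩
  intro v hv hvp hvq
  rw [SimpleGraph.Walk.mem_support_append_iff] at hv
  rcases hv with hv | hv
  · exact hw1 v hv hvp
  · rw [SimpleGraph.Walk.mem_support_append_iff] at hv
    rcases hv with hv | hv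
    · exact hmid v hv
    · rw [SimpleGraph.Walk.support_reverse, List.mem_reverse] at hv
      exact hw2 v hv hvq

lemma rlp_to_cds {V : Type*} {G : SimpleGraph V} {T : Set V}
    (hncomplete : ∃ p q : V, p ≠ q ∧ ¬ G.Adj p q)
    (hT : RLPFeasible G T) : ConnDomSet G T := by
  -- a neighbor in T for any vertex with a non-neighbor
  have key : ∀ v u : V, v ≠ u → ¬ G.Adj v u → ∃ x ∈ T, G.Adj v x := by
    intro v u hvu hnadj
    obtain ⟨w, hw⟩ := hT v u hvu hnadj
    cases w with
    | nil => exact absurd rfl hvu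
    | @cons _ x _ h w' =>
      have hxu : x ≠ u := by rintro rfl; exact hnadj h
      have hx : x ∈ T := hw x (by simp) h.ne' hxu
      exact ⟨x, hx, h⟩
  have hne : T.Nonempty := by
    obtain ⟨p, q, hpq, hnadj⟩ := hncomplete
    obtain ⟨x, hx, _⟩ := key p q hpq hnadj
    exact ⟨x, hx⟩
  refine ⟨hne, ?_, ?_⟩
  · intro v hv
    by_cases huniv : ∃ u, v ≠ u ∧ ¬ G.Adj v u
    · obtain ⟨u, h1, h2⟩ := huniv
      obtain ⟨x, hx, hadj⟩ := key v u h1 h2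
      exact ⟨x, hx, hadj⟩
    · push_neg at huniv
      obtain ⟨t, ht⟩ := hne
      have : v ≠ t := by rintro rfl; exact hv ht
      exact ⟨t, ht, huniv t this⟩
  · rw [SimpleGraph.connected_iff]
    refine ⟨?_, ?_⟩
    · rintro ⟨a, ha⟩ ⟨b, hb⟩
      by_cases hab : a = b
      · subst hab; rfl
      · by_cases hadj : G.Adj a b
        · exact (SimpleGraph.Adj.reachable (show (G.induce T).Adj ⟨a, ha⟩ ⟨b, hb⟩ from hadj))
        · obtain ⟨w, hw⟩ := hT a b hab hadj
          refine walk_reach_induce w ?_ ha hb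
          intro v hv
          by_cases hva : v = a
          · exact hva ▸ ha
          · by_cases hvb : v = b
            · exact hvb ▸ hb
            · exact hw v hv hva hvb
    · obtain ⟨t, ht⟩ := hne
      exact ⟨⟨t, ht⟩⟩

/-- For a finite connected simple graph that is not complete, the minimum cardinality
of an RLP-feasible set equals the minimum cardinality of a connected dominating set. -/
theorem stmt12 {V : Type*} [Fintype V] (G : SimpleGraph V) (hconn : G.Connected)
    (hncomplete : ∃ p q : V, p ≠ q ∧ ¬ G.Adj p q) :
    sInf {k : ℕ | ∃ T : Set V, RLPFeasible G T ∧ T.ncard = k} =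
      sInf {k : ℕ | ∃ T : Set V, ConnDomSet G T ∧ T.ncard = k} := by
  congr 1
  ext k
  constructor
  · rintro ⟨T, h, rfl⟩
    exact ⟨T, rlp_to_cds hncomplete h, rfl⟩
  · rintro ⟨T, h, rfl⟩
    exact ⟨T, cds_to_rlp h, rfl⟩
end
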